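/- arXiv:2206.02920 — 4 statements merged into one kernel-verified Lean document; each statement's English description precedes it below -/
import Mathlib

section
/- Let θ_0, θ_j, θ_k ∈ ℝ with θ_j ≠ 1/2 and θ_k ≠ 1/2, and define p_j = θ_0(1 − θ_j) + (1 − θ_0)θ_j, p_k = θ_0(1 − θ_k) + (1 − θ_0)θ_k, p_{jk} = θ_0(1 − θ_j)(1 − θ_k) + (1 − θ_0)θ_j θ_k, a_{jk} = 1 + 4 p_{jk} − 2(p_j + p_k), and c_{jk} = p_j p_k − p_{jk}. Then the set of real solutions x of the quadratic equation a_{jk} (1 − x) x + c_{jk} = 0 is exactly {θ_0, 1 − θ_0}; in particular, if x* solves the equation then so does 1 − x*, and the quadratic determines θ_0 only up to the substitution θ_0 ↦ 1 − θ_0. -/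
/-- With θ_j ≠ 1/2, θ_k ≠ 1/2 and the probabilities
p_j = θ_0(1−θ_j) + (1−θ_0)θ_j, p_k = θ_0(1−θ_k) + (1−θ_0)θ_k,
p_{jk} = θ_0(1−θ_j)(1−θ_k) + (1−θ_0)θ_jθ_k, a_{jk} = 1 + 4p_{jk} − 2(p_j + p_k),
c_{jk} = p_j p_k − p_{jk}, the set of real solutions x of a_{jk}(1 − x)x + c_{jk} = 0
is exactly {θ_0, 1 − θ_0}; in particular if x* is a solution then so is 1 − x*, so the
quadratic determines θ_0 only up to the substitution θ_0 ↦ 1 − θ_0. -/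
theorem stmt12 (θ0 θj θk pj pk pjk a c : ℝ)
    (hθj : θj ≠ 1 / 2) (hθk : θk ≠ 1 / 2)
    (hpj : pj = θ0 * (1 - θj) + (1 - θ0) * θj)
    (hpk : pk = θ0 * (1 - θk) + (1 - θ0) * θk)
    (hpjk : pjk = θ0 * (1 - θj) * (1 - θk) + (1 - θ0) * θj * θk)
    (ha : a = 1 + 4 * pjk - 2 * (pj + pk))
    (hc : c = pj * pk - pjk) :
    {x : ℝ | a * (1 - x) * x + c = 0} = {θ0, 1 - θ0} ∧
    ∀ x : ℝ, a * (1 - x) * x + c = 0 → a * (1 - (1 - x)) * (1 - x) + c = 0 := by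
  subst hpj hpk hpjk ha hc
  have hA : (1 - 2*θj) ≠ 0 := fun h => hθj (by linarith)
  have hB : (1 - 2*θk) ≠ 0 := fun h => hθk (by linarith)
  constructor
  · ext x
    simp only [Set.mem_setOf_eq, Set.mem_insert_iff, Set.mem_singleton_iff]
    constructor
    · intro h
      have h2 : (1 - 2*θj) * ((1 - 2*θk) * ((x - θ0) * (x - (1 - θ0)))) = 0 := by
        linear_combination -h
      rcases mul_eq_zero.mp h2 with h3 | h3
      · exact absurd h3 hA
      rcases mul_eq_zero.mp h3 with h4 | h4
      · exact absurd h4 hB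
      rcases mul_eq_zero.mp h4 with h5 | h5
      · left; linarith
      · right; linarith
    · rintro (rfl | rfl) <;> ring
  · intro x hx
    linear_combination hx
end

section
/- For every n ≥ 2, every s ∈ {0,1}^{n−1}, and every θ = (θ_0, …, θ_{n−1}) ∈ ℝ^n, the function α(s; θ) = θ_0 ∏_{j=1}^{n−1} [θ_j if s_j = 0 else (1 − θ_j)] + (1 − θ_0) ∏_{j=1}^{n−1} [θ_j if s_j = 1 else (1 − θ_j)] satisfies α(s; θ_0, …, θ_{n−1}) = α(s; 1 − θ_0, …, 1 − θ_{n−1}). Consequently, the two parameter vectors θ and (1 − θ_0, …, 1 − θ_{n−1}) generate identical outcome distributions {α(s)}_{s ∈ {0,1}^{n−1}}, so θ is not identifiable from these distributions. -/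
/-- The outcome probability α(s; θ) of observing flip pattern s ∈ {0,1}^{n−1} at the
end-nodes of a star network with n = m + 1 bit-flip channels, where channel i flips
with probability 1 − θ_i and node j observes F_0 ⊕ F_j:
α(s; θ) = θ_0 ∏_j [θ_j if s_j = 0 else (1−θ_j)]
        + (1−θ_0) ∏_j [θ_j if s_j = 1 else (1−θ_j)]. -/
def alphaStar (m : ℕ) (θ : Fin (m + 1) → ℝ) (s : Fin m → Bool) : ℝ :=
  θ 0 * ∏ j : Fin m, (if s j then 1 - θ j.succ else θ j.succ)
    + (1 - θ 0) * ∏ j : Fin m, (if s j then θ j.succ else 1 - θ j.succ)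

/-- For every n = m + 1 ≥ 2, every s ∈ {0,1}^{n−1} and every θ ∈ ℝ^n,
α(s; θ) = α(s; 1 − θ), where (1 − θ)_i = 1 − θ_i. Consequently the parameter vectors θ
and 1 − θ generate identical outcome distributions {α(s)}_s, so the map
θ ↦ (α(s; θ))_s is not injective: θ is not identifiable from these distributions. -/
theorem stmt14 (m : ℕ) (hm : 1 ≤ m) :
    (∀ (θ : Fin (m + 1) → ℝ) (s : Fin m → Bool),
        alphaStar m θ s = alphaStar m (fun i => 1 - θ i) s) ∧
    ¬ Function.Injective (fun θ : Fin (m + 1) → ℝ => fun s : Fin m → Bool => alphaStar m θ s) := by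
  have key : ∀ (θ : Fin (m + 1) → ℝ) (s : Fin m → Bool),
      alphaStar m θ s = alphaStar m (fun i => 1 - θ i) s := by
    intro θ s
    simp only [alphaStar, sub_sub_cancel]
    ring
  refine ⟨key, fun hinj => ?_⟩
  have h := hinj (a₁ := fun _ => 0) (a₂ := fun i => 1 - (fun _ : Fin (m+1) => (0:ℝ)) i) ?_
  · have := congrFun h 0
    norm_num at this
  · funext s
    exact key (fun _ => 0) s
end

section
/- Let n ≥ 2 and θ_0, …, θ_{n−1} ∈ [0,1]. Let 𝒩 be the n-qubit channel applying the bit-flip channel ℰ_{θ_j}(ρ) = θ_j ρ + (1 − θ_j) X ρ X to qubit j for each j ∈ {1, …, n−1} (and identity on qubit 0). Then 𝒩(θ_0 Φ_{0⋯0}^0 + (1 − θ_0) Φ_{1⋯1}^0) = Σ_{s ∈ {0,1}^{n−1}} α(s) Φ_s^0, where Φ_s^b = |Φ_s^b⟩⟨Φ_s^b| are the n-qubit GHZ projectors and α(s) = θ_0 ∏_{j=1}^{n−1} [θ_j if s_j = 0 else (1 − θ_j)] + (1 − θ_0) ∏_{j=1}^{n−1} [θ_j if s_j = 1 else (1 −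 θ_j)]; thus the resulting GHZ-diagonal state has exactly the same eigenvalue distribution α(s) as the computational-basis scheme. -/
open Matrix

/-- The n-qubit GHZ state |Φ_s^b⟩ = (|0 s⟩ + (−1)^b |1 s̄⟩)/√2, with n = m + 1 qubits;
the n-qubit space (ℂ²)^{⊗n} is identified with functions {0,1}^n → ℂ, a basis index
being the pair of the bit on qubit 0 and the remaining m bits (qubits 1,…,n−1). -/
noncomputable def ghzF (m : ℕ) (s : Fin m → Bool) (b : Bool) :
    Bool × (Fin m → Bool) → ℂ :=
  ((Real.sqrt 2 : ℂ))⁻¹ •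
    ((Pi.single (false, s) 1 : Bool × (Fin m → Bool) → ℂ) +
      ((-1 : ℂ) ^ b.toNat) • (Pi.single (true, fun j => !(s j)) 1 : Bool × (Fin m → Bool) → ℂ))

/-- The n-qubit GHZ projector Φ_s^b = |Φ_s^b⟩⟨Φ_s^b|. -/
noncomputable def ghzProj (m : ℕ) (s : Fin m → Bool) (b : Bool) :
    Matrix (Bool × (Fin m → Bool)) (Bool × (Fin m → Bool)) ℂ :=
  Matrix.vecMulVec (ghzF m s b) (star (ghzF m s b))

def flipF {m : ℕ} (j : Fin m) (s : Fin m → Bool) : Fin m → Bool :=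
  Function.update s j (!(s j))

lemma flipF_invol {m : ℕ} (j : Fin m) : Function.Involutive (flipF j) := by
  intro s; funext k
  by_cases hk : k = j
  · subst hk; simp [flipF]
  · simp [flipF, Function.update_of_ne hk]

def flipP {m : ℕ} (j : Fin m) (p : Bool × (Fin m → Bool)) : Bool × (Fin m → Bool) :=
  (p.1, flipF j p.2)

lemma flipP_invol {m : ℕ} (j : Fin m) : Function.Involutive (flipP j) := by
  intro p; simp [flipP, flipF_invol j p.2]

-- vector lemma
lemma ghzF_flip {m : ℕ} (j : Fin m) (s : Fin m → Bool) (b : Bool) (p : Bool × (Fin m → Bool)) :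
    ghzF m s b (flipP j p) = ghzF m (flipF j s) b p := by
  have h1 : (flipP j p = (false, s)) ↔ (p = (false, flipF j s)) := by
    rw [(flipP_invol j).eq_iff]; rfl
  have h2 : (flipP j p = (true, fun k => !(s k))) ↔ (p = (true, fun k => !(flipF j s k))) := by
    have : flipP j (true, fun k => !(s k)) = (true, fun k => !(flipF j s k)) := by
      simp only [flipP, Prod.mk.injEq, true_and]
      funext k
      by_cases hk : k = j
      · subst hk; simp [flipF]
      · simp [flipF, Function.update_of_ne hk]
    rw [(flipP_invol j).eq_iff, this]
  simp only [ghzF, Pi.smul_apply, Pi.add_apply, Pi.single_apply, smul_eq_mul, h1, h2]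

lemma eq_flipP_comm {m : ℕ} (j : Fin m) (p r : Bool × (Fin m → Bool)) :
    p = flipP j r ↔ r = flipP j p := by
  constructor <;> rintro rfl <;> exact ((flipP_invol j) _).symm

lemma Xmul {m : ℕ} (j : Fin m)
    (Xj : Matrix (Bool × (Fin m → Bool)) (Bool × (Fin m → Bool)) ℂ)
    (hXj : Xj = Matrix.of fun p q =>
      if p = (q.1, Function.update q.2 j (!(q.2 j))) then 1 else 0)
    (A : Matrix (Bool × (Fin m → Bool)) (Bool × (Fin m → Bool)) ℂ) :
    Xj * A = Matrix.of fun p q => A (flipP j p) q := by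
  subst hXj
  ext p q
  have hcond : ∀ r : Bool × (Fin m → Bool),
      (p = (r.1, Function.update r.2 j (!(r.2 j)))) ↔ (r = flipP j p) := by
    intro r; exact eq_flipP_comm j p r
  simp only [Matrix.mul_apply, Matrix.of_apply, hcond, ite_mul, one_mul, zero_mul]
  simp

lemma mulX {m : ℕ} (j : Fin m)
    (Xj : Matrix (Bool × (Fin m → Bool)) (Bool × (Fin m → Bool)) ℂ)
    (hXj : Xj = Matrix.of fun p q =>
      if p = (q.1, Function.update q.2 j (!(q.2 j))) then 1 else 0)
    (A : Matrix (Bool × (Fin m → Bool)) (Bool × (Fin m → Bool)) ℂ) :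
    A * Xj = Matrix.of fun p q => A p (flipP j q) := by
  subst hXj
  ext p q
  simp only [Matrix.mul_apply, Matrix.of_apply, mul_ite, mul_one, mul_zero]
  simp [flipP, flipF]

lemma conj_ghz {m : ℕ} (j : Fin m)
    (Xj : Matrix (Bool × (Fin m → Bool)) (Bool × (Fin m → Bool)) ℂ)
    (hXj : Xj = Matrix.of fun p q =>
      if p = (q.1, Function.update q.2 j (!(q.2 j))) then 1 else 0)
    (s : Fin m → Bool) (b : Bool) :
    Xj * ghzProj m s b * Xj = ghzProj m (flipF j s) b := by
  rw [Xmul j Xj hXj, mulX j Xj hXj]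
  ext p q
  simp only [Matrix.of_apply, ghzProj, Matrix.vecMulVec_apply, Pi.star_apply, ghzF_flip]

noncomputable def wgt {m : ℕ} (θ : Fin m → ℝ) (c : Bool) (T : Finset (Fin m))
    (s : Fin m → Bool) : ℂ :=
  ∏ j, (if j ∈ T then (if s j = c then (θ j : ℂ) else ((1 - θ j : ℝ) : ℂ))
        else (if s j = c then 1 else 0))

lemma wgt_empty {m : ℕ} (θ : Fin m → ℝ) (c : Bool) (s : Fin m → Bool) :
    wgt θ c ∅ s = if s = (fun _ => c) then 1 else 0 := by
  unfold wgt
  simp only [Finset.notMem_empty, if_false]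
  rw [Finset.prod_boole]
  congr 1
  simp [funext_iff]

lemma wgt_step {m : ℕ} (θ : Fin m → ℝ) (c : Bool) (j : Fin m) (T : Finset (Fin m))
    (hj : j ∉ T) (s : Fin m → Bool) :
    (θ j : ℂ) * wgt θ c T s + ((1 - θ j : ℝ) : ℂ) * wgt θ c T (flipF j s)
      = wgt θ c (insert j T) s := by
  unfold wgt
  rw [← Finset.mul_prod_erase Finset.univ _ (Finset.mem_univ j),
      ← Finset.mul_prod_erase Finset.univ _ (Finset.mem_univ j),
      ← Finset.mul_prod_erase Finset.univ _ (Finset.mem_univ j)]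
  have h2 : (∏ k ∈ Finset.univ.erase j,
        (if k ∈ T then (if flipF j s k = c then (θ k : ℂ) else ((1 - θ k : ℝ) : ℂ))
         else (if flipF j s k = c then 1 else 0)))
      = ∏ k ∈ Finset.univ.erase j,
        (if k ∈ T then (if s k = c then (θ k : ℂ) else ((1 - θ k : ℝ) : ℂ))
         else (if s k = c then 1 else 0)) := by
    refine Finset.prod_congr rfl fun k hk => ?_
    have hkj : k ≠ j := Finset.ne_of_mem_erase hk
    rw [flipF, Function.update_of_ne hkj]
  have h3 : (∏ k ∈ Finset.univ.erase j,
        (if k ∈ insert j T then (if s k = c then (θ k : ℂ) else ((1 - θ k : ℝ) : ℂ))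
         else (if s k = c then 1 else 0)))
      = ∏ k ∈ Finset.univ.erase j,
        (if k ∈ T then (if s k = c then (θ k : ℂ) else ((1 - θ k : ℝ) : ℂ))
         else (if s k = c then 1 else 0)) := by
    refine Finset.prod_congr rfl fun k hk => ?_
    have hkj : k ≠ j := Finset.ne_of_mem_erase hk
    simp [Finset.mem_insert, hkj]
  rw [h2, h3]
  have hjj : flipF j s j = !(s j) := by simp [flipF]
  rw [hjj]
  simp only [hj, if_neg, Finset.mem_insert, true_or, if_true, if_pos rfl]
  cases c <;> cases hs : s j <;> simp [hs]

/-- Let n = m + 1 ≥ 2 and θ_0, …, θ_{n−1} ∈ [0,1]. Let 𝒩 be the n-qubit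
channel applying the bit-flip channel ℰ_{θ_j}(ρ) = θ_j ρ + (1 − θ_j) X ρ X to qubit j
for j = 1, …, n−1 (identity on qubit 0), the commuting maps composed in any order.
Then 𝒩(θ_0 Φ_{0⋯0}^0 + (1 − θ_0) Φ_{1⋯1}^0) = Σ_s α(s) Φ_s^0, with
α(s) = θ_0 ∏_j [θ_j if s_j = 0 else (1−θ_j)] + (1−θ_0) ∏_j [θ_j if s_j = 1 else (1−θ_j)]:
the GHZ-diagonal output has the same eigenvalue distribution as the computational-basis
scheme. -/
theorem stmt17 (m : ℕ) (hm : 1 ≤ m) (θ0 : ℝ) (θ : Fin m → ℝ)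
    (hθ0 : θ0 ∈ Set.Icc (0 : ℝ) 1) (hθ : ∀ j, θ j ∈ Set.Icc (0 : ℝ) 1)
    (X : Fin m → Matrix (Bool × (Fin m → Bool)) (Bool × (Fin m → Bool)) ℂ)
    (hX : ∀ j, X j = Matrix.of fun p q =>
      if p = (q.1, Function.update q.2 j (!(q.2 j))) then 1 else 0)
    (chan : Fin m → Matrix (Bool × (Fin m → Bool)) (Bool × (Fin m → Bool)) ℂ →
      Matrix (Bool × (Fin m → Bool)) (Bool × (Fin m → Bool)) ℂ)
    (hchan : ∀ j ρ, chan j ρ = (θ j : ℂ) • ρ + ((1 - θ j : ℝ) : ℂ) • (X j * ρ * X j)) :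
    ∀ l : List (Fin m), l.Perm (List.finRange m) →
      (l.foldr (fun j f => chan j ∘ f) id)
          ((θ0 : ℂ) • ghzProj m (fun _ => false) false
            + ((1 - θ0 : ℝ) : ℂ) • ghzProj m (fun _ => true) false)
        = ∑ s : Fin m → Bool,
            ((θ0 * ∏ j, (if s j then 1 - θ j else θ j)
              + (1 - θ0) * ∏ j, (if s j then θ j else 1 - θ j) : ℝ) : ℂ)
              • ghzProj m s false := by
  -- the GHZ-diagonal state after applying the channels indexed by T
  set β : Finset (Fin m) → (Fin m → Bool) → ℂ := fun T s =>
    (θ0 : ℂ) * wgt θ false T s + ((1 - θ0 : ℝ) : ℂ) * wgt θ true T s with hβ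
  set st : Finset (Fin m) → Matrix (Bool × (Fin m → Bool)) (Bool × (Fin m → Bool)) ℂ :=
    fun T => ∑ s : Fin m → Bool, β T s • ghzProj m s false with hst
  -- channel is linear on sums of scalar multiples
  have hchan_lin : ∀ (j : Fin m) (f : (Fin m → Bool) → ℂ)
      (g : (Fin m → Bool) → Matrix (Bool × (Fin m → Bool)) (Bool × (Fin m → Bool)) ℂ),
      chan j (∑ s : Fin m → Bool, f s • g s) = ∑ s : Fin m → Bool, f s • chan j (g s) := by
    intro j f g
    simp only [hchan, Finset.mul_sum, Finset.sum_mul, Matrix.mul_smul, Matrix.smul_mul,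
      Finset.smul_sum]
    rw [← Finset.sum_add_distrib]
    refine Finset.sum_congr rfl fun s _ => ?_
    rw [smul_add, smul_smul, smul_smul, smul_smul, smul_smul,
        mul_comm ((θ j : ℂ)) (f s), mul_comm (((1 - θ j : ℝ) : ℂ)) (f s)]
  -- action of one channel on one GHZ projector
  have hφ : ∀ (j : Fin m) (s : Fin m → Bool),
      chan j (ghzProj m s false) = (θ j : ℂ) • ghzProj m s false
        + ((1 - θ j : ℝ) : ℂ) • ghzProj m (flipF j s) false := by
    intro j s
    rw [hchan, conj_ghz j (X j) (hX j)]
  -- the initial state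
  have hempty : st ∅ = (θ0 : ℂ) • ghzProj m (fun _ => false) false
      + ((1 - θ0 : ℝ) : ℂ) • ghzProj m (fun _ => true) false := by
    rw [hst]
    simp only [hβ, wgt_empty, mul_ite, mul_one, mul_zero, add_smul, ite_smul, zero_smul]
    rw [Finset.sum_add_distrib, Finset.sum_ite_eq' Finset.univ (fun _ => false),
        Finset.sum_ite_eq' Finset.univ (fun _ => true)]
    simp
  -- induction step
  have hstep : ∀ (j : Fin m) (T : Finset (Fin m)), j ∉ T →
      chan j (st T) = st (insert j T) := by
    intro j T hj
    rw [hst]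
    rw [hchan_lin]
    simp only [hφ, smul_add, smul_smul]
    rw [Finset.sum_add_distrib]
    have hre : (∑ s : Fin m → Bool, (β T s * ((1 - θ j : ℝ) : ℂ)) • ghzProj m (flipF j s) false)
        = ∑ s : Fin m → Bool, (β T (flipF j s) * ((1 - θ j : ℝ) : ℂ)) • ghzProj m s false := by
      refine Fintype.sum_bijective (flipF j) ((flipF_invol j).bijective) _ _ fun s => ?_
      rw [(flipF_invol j) s]
    rw [hre, ← Finset.sum_add_distrib]
    refine Finset.sum_congr rfl fun s _ => ?_
    rw [← add_smul]
    congr 1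
    simp only [hβ]
    rw [← wgt_step θ false j T hj s, ← wgt_step θ true j T hj s]
    ring
  -- folding over a nodup list
  have hfold : ∀ l : List (Fin m), l.Nodup →
      (l.foldr (fun j f => chan j ∘ f) id)
          ((θ0 : ℂ) • ghzProj m (fun _ => false) false
            + ((1 - θ0 : ℝ) : ℂ) • ghzProj m (fun _ => true) false)
        = st l.toFinset := by
    intro l
    induction l with
    | nil =>
      intro _
      simp only [List.foldr_nil, id_eq, List.toFinset_nil]
      exact hempty.symm
    | cons j t ih =>
      intro hnd
      have hjt : j ∉ t.toFinset := by
        simp only [List.mem_toFinset]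
        exact (List.nodup_cons.mp hnd).1
      simp only [List.foldr_cons, Function.comp_apply]
      rw [ih (List.nodup_cons.mp hnd).2, hstep j t.toFinset hjt, List.toFinset_cons]
  intro l hl
  have hnd : l.Nodup := hl.nodup_iff.mpr (List.nodup_finRange m)
  have htf : l.toFinset = Finset.univ := by
    ext x; simp [List.mem_toFinset, hl.mem_iff]
  rw [hfold l hnd, htf, hst]
  refine Finset.sum_congr rfl fun s _ => ?_
  congr 1
  simp only [hβ]
  have e1 : wgt θ false Finset.univ s = ((∏ j, (if s j then 1 - θ j else θ j) : ℝ) : ℂ) := by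
    unfold wgt
    rw [Complex.ofReal_prod]
    refine Finset.prod_congr rfl fun j _ => ?_
    cases hs : s j <;> simp [hs]
  have e2 : wgt θ true Finset.univ s = ((∏ j, (if s j then θ j else 1 - θ j) : ℝ) : ℂ) := by
    unfold wgt
    rw [Complex.ofReal_prod]
    refine Finset.prod_congr rfl fun j _ => ?_
    cases hs : s j <;> simp [hs]
  rw [e1, e2]
  push_cast
  ring
end

section
/- Let n ≥ 2 and θ_0, …, θ_{n−1} ∈ [0,1], and let ρ(θ) = Σ_{s ∈ {0,1}^{n−1}} β(s) (θ_0 Φ_s^0 + (1 − θ_0) Φ_s^1) with β(s) = ∏_{j=1}^{n−1} [θ_j if s_j = 0 else (1 − θ_j)]. Then the GHZ-basis measurement probabilities satisfy Tr(ρ(θ) Φ_s^b) = β(s) · θ_0 if b = 0 and β(s) · (1 − θ_0) if b = 1; moreover θ_0 = Σ_s Tr(ρ(θ) Φ_s^0) and, for each j ∈ {1, …, n−1}, θ_j = Σ_{b ∈ {0,1}} Σ_{s : s_j = 0} Tr(ρ(θ) Φ_s^b). Consequently the map θ ↦ (Tr(ρ(θ) Φ_s^b))_{s,b} is injective on [0,1]^n,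 i.e., the GHZ-basis measurement statistics identify all n channel parameters. -/
open Matrix

/-- β(s) = ∏_{j=1}^{n−1} [θ_j if s_j = 0 else (1 − θ_j)], the probability of flip
pattern s on channels 1, …, n−1. -/
def betaStar (m : ℕ) (θ : Fin m → ℝ) (s : Fin m → Bool) : ℝ :=
  ∏ j, (if s j then 1 - θ j else θ j)

/-- The GHZ-diagonal state ρ(θ) = Σ_s β(s) (θ_0 Φ_s^0 + (1 − θ_0) Φ_s^1). -/
noncomputable def rhoGHZ (m : ℕ) (θ0 : ℝ) (θ : Fin m → ℝ) :
    Matrix (Bool × (Fin m → Bool)) (Bool × (Fin m → Bool)) ℂ :=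
  ∑ s : Fin m → Bool,
    ((betaStar m θ s : ℝ) : ℂ) •
      ((θ0 : ℂ) • ghzProj m s false + ((1 - θ0 : ℝ) : ℂ) • ghzProj m s true)

lemma single_dot (n : Type*) [Fintype n] [DecidableEq n] (v : n → ℂ) (i : n) (x : ℂ) :
    (Pi.single i x : n → ℂ) ⬝ᵥ v = x * v i := by
  simp [dotProduct, Pi.single_apply, Finset.sum_ite_eq]

lemma star_single (n : Type*) [DecidableEq n] (i : n) (x : ℂ) :
    star (Pi.single i x : n → ℂ) = Pi.single i (star x) := by
  funext j; simp [Pi.single_apply, apply_ite star]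

lemma ghz_dot (m : ℕ) (s s' : Fin m → Bool) (b b' : Bool) :
    star (ghzF m s b) ⬝ᵥ ghzF m s' b' = if s = s' ∧ b = b' then 1 else 0 := by
  classical
  have hnot : ((fun j => !(s' j)) = fun j => !(s j)) ↔ s' = s := by
    constructor
    · intro h; funext j; have := congrFun h j; simpa using this
    · intro h; rw [h]
  have hsq : (Real.sqrt 2 : ℂ)⁻¹ * (Real.sqrt 2 : ℂ)⁻¹ = 2⁻¹ := by
    rw [← mul_inv]
    norm_cast
    rw [Real.mul_self_sqrt (by norm_num)]
    norm_num
  have hsq2 : ((Real.sqrt 2 : ℂ))⁻¹ ^ 2 * 2 = 1 := by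
    rw [sq, hsq]; norm_num
  unfold ghzF
  simp only [star_smul, star_add, star_single, star_pow, star_neg, star_one,
    smul_dotProduct, dotProduct_smul, add_dotProduct, dotProduct_add,
    single_dot, dotProduct_single, smul_eq_mul]
  simp only [Pi.single_apply, Pi.add_apply, Pi.smul_apply, smul_eq_mul, star_inv₀,
    Complex.star_def, Complex.conj_ofReal, Prod.mk.injEq]
  cases b <;> cases b' <;> by_cases h : s = s' <;>
    simp [h, hnot, eq_comm, hsq, hsq2] <;> ring_nf <;>
    simp [hsq, hsq2, sq] <;> linear_combination hsq2

lemma trace_vmv_mul_vmv {n : Type*} [Fintype n] (u v w x : n → ℂ) :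
    (vecMulVec u v * vecMulVec w x).trace = (v ⬝ᵥ w) * (x ⬝ᵥ u) := by
  simp only [Matrix.trace, Matrix.diag_apply, Matrix.mul_apply, vecMulVec_apply, dotProduct]
  rw [Finset.sum_mul_sum]
  rw [Finset.sum_comm]
  apply Finset.sum_congr rfl; intro i _
  apply Finset.sum_congr rfl; intro j _
  ring

lemma ghz_norm (m : ℕ) (s : Fin m → Bool) (b : Bool) :
    star (ghzF m s b) ⬝ᵥ ghzF m s b = 1 := by
  simp [ghz_dot]

lemma trace_proj_mul (m : ℕ) (s s' : Fin m → Bool) (b b' : Bool) :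
    (ghzProj m s b * ghzProj m s' b').trace = if s' = s ∧ b' = b then 1 else 0 := by
  unfold ghzProj
  rw [trace_vmv_mul_vmv]
  by_cases h : s' = s ∧ b' = b
  · obtain ⟨h1, h2⟩ := h
    subst h1; subst h2
    simp [ghz_norm]
  · rw [ghz_dot, ghz_dot, if_neg h, mul_zero]

lemma pi_sum_prod {m : ℕ} (f : Fin m → Bool → ℝ) :
    ∑ s : Fin m → Bool, ∏ j, f j (s j) = ∏ j, (f j false + f j true) := by
  rw [← Fintype.prod_sum f]
  apply Finset.prod_congr rfl
  intro j _
  rw [Fintype.sum_bool]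
  ring


lemma trace_rho_proj (m : ℕ) (θ0 : ℝ) (θ : Fin m → ℝ) (s : Fin m → Bool) (b : Bool) :
    (rhoGHZ m θ0 θ * ghzProj m s b).trace
      = ((betaStar m θ s * (if b then 1 - θ0 else θ0) : ℝ) : ℂ) := by
  classical
  unfold rhoGHZ
  rw [Finset.sum_mul, trace_sum]
  simp only [smul_mul_assoc, add_mul, trace_smul, trace_add, trace_proj_mul, smul_eq_mul]
  cases b <;>
    simp [Finset.sum_ite_eq', mul_ite, mul_comm, mul_add] <;> push_cast <;> ring

lemma beta_sum (m : ℕ) (θ : Fin m → ℝ) : ∑ s : Fin m → Bool, betaStar m θ s = 1 := by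
  classical
  unfold betaStar
  rw [pi_sum_prod (fun j b => if b then 1 - θ j else θ j)]
  simp

lemma beta_sum_filter (m : ℕ) (θ : Fin m → ℝ) (j : Fin m) :
    ∑ s ∈ Finset.univ.filter (fun s : Fin m → Bool => s j = false), betaStar m θ s = θ j := by
  classical
  rw [Finset.sum_filter]
  have key : ∀ s : Fin m → Bool,
      (if s j = false then betaStar m θ s else 0)
        = ∏ k, (if k = j then (if s k then 0 else θ j) else (if s k then 1 - θ k else θ k)) := by
    intro s
    by_cases h : s j = false
    · rw [if_pos h]
      unfold betaStar
      apply Finset.prod_congr rfl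
      intro k _
      by_cases hk : k = j
      · subst hk; rw [if_pos rfl, h]; simp
      · rw [if_neg hk]
    · rw [if_neg h]
      symm
      apply Finset.prod_eq_zero (Finset.mem_univ j)
      simp at h
      simp [h]
  simp only [key]
  rw [pi_sum_prod (fun k b => if k = j then (if b then 0 else θ j) else (if b then 1 - θ k else θ k))]
  have : ∀ k : Fin m, ((if k = j then θ j else θ k) + if k = j then 0 else 1 - θ k) = if k = j then θ j else 1 := by
    intro k
    by_cases hk : k = j <;> simp [hk]
  simp only [reduceIte, Bool.false_eq_true, if_false]
  rw [Finset.prod_congr rfl fun k _ => this k]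
  simp [Finset.prod_ite_eq']

lemma id_theta0 (m : ℕ) (θ0 : ℝ) (θ : Fin m → ℝ) :
    (θ0 : ℂ) = ∑ s : Fin m → Bool, (rhoGHZ m θ0 θ * ghzProj m s false).trace := by
  rw [Finset.sum_congr rfl fun s _ => trace_rho_proj m θ0 θ s false]
  simp only [Bool.false_eq_true, if_false]
  norm_cast
  rw [← Finset.sum_mul, beta_sum, one_mul]

lemma id_thetaj (m : ℕ) (θ0 : ℝ) (θ : Fin m → ℝ) (j : Fin m) :
    (θ j : ℂ) = ∑ b : Bool, ∑ s ∈ Finset.univ.filter (fun s : Fin m → Bool => s j = false),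
      (rhoGHZ m θ0 θ * ghzProj m s b).trace := by
  rw [Finset.sum_congr rfl fun b _ => Finset.sum_congr rfl fun s _ => trace_rho_proj m θ0 θ s b]
  rw [Fintype.sum_bool]
  simp only [Bool.false_eq_true, if_false, if_true]
  norm_cast
  rw [← Finset.sum_mul, ← Finset.sum_mul, beta_sum_filter]
  ring

/-- For n = m + 1 ≥ 2 and θ_0, …, θ_{n−1} ∈ [0,1], the GHZ-basis
measurement statistics of ρ(θ) = Σ_s β(s)(θ_0 Φ_s^0 + (1 − θ_0) Φ_s^1) satisfy
Tr(ρ(θ) Φ_s^b) = β(s)·θ_0 for b = 0 and β(s)·(1 − θ_0) for b = 1; moreover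
θ_0 = Σ_s Tr(ρ(θ) Φ_s^0) and θ_j = Σ_b Σ_{s : s_j = 0} Tr(ρ(θ) Φ_s^b) for each j, so
the map θ ↦ (Tr(ρ(θ) Φ_s^b))_{s,b} is injective on [0,1]^n: the GHZ-basis measurement
statistics identify all n channel parameters. -/
theorem stmt19 (m : ℕ) (hm : 1 ≤ m) :
    (∀ (θ0 : ℝ) (θ : Fin m → ℝ), θ0 ∈ Set.Icc (0 : ℝ) 1 → (∀ j, θ j ∈ Set.Icc (0 : ℝ) 1) →
      (∀ (s : Fin m → Bool) (b : Bool),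
        (rhoGHZ m θ0 θ * ghzProj m s b).trace
          = ((betaStar m θ s * (if b then 1 - θ0 else θ0) : ℝ) : ℂ)) ∧
      ((θ0 : ℂ) = ∑ s : Fin m → Bool, (rhoGHZ m θ0 θ * ghzProj m s false).trace) ∧
      (∀ j : Fin m, (θ j : ℂ) =
        ∑ b : Bool, ∑ s ∈ Finset.univ.filter (fun s : Fin m → Bool => s j = false),
          (rhoGHZ m θ0 θ * ghzProj m s b).trace)) ∧
    Set.InjOn
      (fun q : ℝ × (Fin m → ℝ) =>
        fun p : (Fin m → Bool) × Bool => (rhoGHZ m q.1 q.2 * ghzProj m p.1 p.2).trace)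
      {q : ℝ × (Fin m → ℝ) | q.1 ∈ Set.Icc (0 : ℝ) 1 ∧ ∀ j, q.2 j ∈ Set.Icc (0 : ℝ) 1} := by
  constructor
  · intro θ0 θ _ _
    exact ⟨trace_rho_proj m θ0 θ, id_theta0 m θ0 θ, id_thetaj m θ0 θ⟩
  · intro q _ q' _ h
    have h' : ∀ (s : Fin m → Bool) (b : Bool),
        (rhoGHZ m q.1 q.2 * ghzProj m s b).trace
          = (rhoGHZ m q'.1 q'.2 * ghzProj m s b).trace := fun s b => congrFun h (s, b)
    have h1 : q.1 = q'.1 := by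
      have e := id_theta0 m q.1 q.2
      rw [Finset.sum_congr rfl fun s _ => h' s false, ← id_theta0 m q'.1 q'.2] at e
      exact_mod_cast e
    have h2 : q.2 = q'.2 := by
      funext j
      have e := id_thetaj m q.1 q.2 j
      rw [Finset.sum_congr rfl fun b _ => Finset.sum_congr rfl fun s _ => h' s b,
        ← id_thetaj m q'.1 q'.2 j] at e
      exact_mod_cast e
    exact Prod.ext h1 h2
end
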